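/- For m = 3 (standard 9×9 Sudoku), the number of 3×3 almost-balanced 0–1 matrices equals 290, and the number of valid placements equals 3!^6 = 46656. -/

import Mathlib

/-- Number of nonzero (true) entries in row `i` of a 0-1 matrix. -/
def rowCount {a b : ℕ} (M : Fin a → Fin b → Bool) (i : Fin a) : ℕ :=
  (Finset.univ.filter (fun j => M i j = true)).card

/-- A 0-1 matrix is almost balanced if every two rows have numbers of
nonzeros differing by at most one. -/
def AlmostBalanced {a b : ℕ} (M : Fin a → Fin b → Bool) : Prop :=
  ∀ i i' : Fin a, rowCount M i ≤ rowCount M i' + 1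
/-- A valid placement on the `ab × ab` Sudoku grid with `a × b` blocks:
exactly one cell in each row, each column, and each block. -/
def IsValidPlacement (a b : ℕ) (P : Finset (Fin (a*b) × Fin (a*b))) : Prop :=
  (∀ r : Fin (a*b), (P.filter (fun p => p.1 = r)).card = 1) ∧
  (∀ c : Fin (a*b), (P.filter (fun p => p.2 = c)).card = 1) ∧
  (∀ (i : Fin b) (j : Fin a),
    (P.filter (fun p => p.1.val / a = i.val ∧ p.2.val / b = j.val)).card = 1)

instance {a b : ℕ} (M : Fin a → Fin b → Bool) : Decidable (AlmostBalanced M) := by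
  unfold AlmostBalanced; infer_instance

namespace Sudoku33

abbrev PP := (Fin 3 → Equiv.Perm (Fin 3)) × (Fin 3 → Equiv.Perm (Fin 3))

def enc (i r : Fin 3) : Fin (3*3) := ⟨3 * i.val + r.val, by omega⟩

lemma enc_div (i r : Fin 3) : (enc i r).val / 3 = i.val := by
  have := r.isLt; simp [enc]; omega

lemma enc_mod (i r : Fin 3) : (enc i r).val % 3 = r.val := by
  simp [enc] <;> omega

lemma enc_inj {i r i' r' : Fin 3} (h : enc i r = enc i' r') : i = i' ∧ r = r' := by
  have h1 : (enc i r).val / 3 = (enc i' r').val / 3 := by rw [h]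
  have h2 : (enc i r).val % 3 = (enc i' r').val % 3 := by rw [h]
  rw [enc_div, enc_div] at h1; rw [enc_mod, enc_mod] at h2
  exact ⟨Fin.ext h1, Fin.ext h2⟩

lemma enc_surj (row : Fin (3*3)) :
    row = enc ⟨row.val / 3, by omega⟩ ⟨row.val % 3, by omega⟩ := by
  apply Fin.ext; simp [enc]; omega

def Fmap (x : PP) (row : Fin (3*3)) : Fin (3*3) :=
  let i : Fin 3 := ⟨row.val / 3, by omega⟩
  let r : Fin 3 := ⟨row.val % 3, by omega⟩
  enc (x.1 i r) (x.2 (x.1 i r) i)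

lemma Fmap_enc (x : PP) (i r : Fin 3) :
    Fmap x (enc i r) = enc (x.1 i r) (x.2 (x.1 i r) i) := by
  have h1 : (⟨(enc i r).val / 3, by omega⟩ : Fin 3) = i := Fin.ext (enc_div i r)
  have h2 : (⟨(enc i r).val % 3, by omega⟩ : Fin 3) = r := Fin.ext (enc_mod i r)
  simp only [Fmap, h1, h2]

lemma Fmap_inj (x : PP) : Function.Injective (Fmap x) := by
  intro ρ ρ' h
  rw [enc_surj ρ, enc_surj ρ'] at h ⊢
  rw [Fmap_enc, Fmap_enc] at h
  obtain ⟨hs, hc⟩ := enc_inj h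
  have hi : (⟨ρ.val / 3, by omega⟩ : Fin 3) = ⟨ρ'.val / 3, by omega⟩ := by
    rw [hs] at hc; exact (x.2 _).injective hc
  rw [hi] at hs ⊢
  have hr := (x.1 _).injective hs
  rw [hr]

def Pmap (x : PP) : Finset (Fin (3*3) × Fin (3*3)) :=
  Finset.univ.image (fun row => (row, Fmap x row))

lemma mem_Pmap (x : PP) (p : Fin (3*3) × Fin (3*3)) :
    p ∈ Pmap x ↔ p.2 = Fmap x p.1 := by
  constructor
  · intro hp
    obtain ⟨row, -, hrow⟩ := Finset.mem_image.mp hp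
    rw [← hrow]
  · intro hp
    apply Finset.mem_image.mpr
    exact ⟨p.1, Finset.mem_univ _, by rw [← hp]⟩

lemma Pmap_valid (x : PP) : IsValidPlacement 3 3 (Pmap x) := by
  refine ⟨?_, ?_, ?_⟩
  · intro r
    rw [Finset.card_eq_one]
    refine ⟨(r, Fmap x r), ?_⟩
    ext p
    simp only [Finset.mem_filter, mem_Pmap, Finset.mem_singleton]
    constructor
    · rintro ⟨h2, h1⟩; exact Prod.ext h1 (by rw [h2, h1])
    · rintro rfl; exact ⟨rfl, rfl⟩
  · intro c
    obtain ⟨row, hrow⟩ := (Finite.injective_iff_bijective.mp (Fmap_inj x)).2 c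
    rw [Finset.card_eq_one]
    refine ⟨(row, c), ?_⟩
    ext p
    simp only [Finset.mem_filter, mem_Pmap, Finset.mem_singleton]
    constructor
    · rintro ⟨h2, h1⟩
      have : p.1 = row := Fmap_inj x (by rw [← h2, h1, hrow])
      exact Prod.ext this h1
    · rintro rfl; exact ⟨hrow.symm, rfl⟩
  · intro i j
    set r₀ := (x.1 i).symm j with hr₀
    rw [Finset.card_eq_one]
    refine ⟨(enc i r₀, Fmap x (enc i r₀)), ?_⟩
    ext p
    simp only [Finset.mem_filter, mem_Pmap, Finset.mem_singleton]
    constructor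
    · rintro ⟨h2, hdi, hdj⟩
      have hb : (p.1.val % 3) < 3 := Nat.mod_lt _ (by norm_num)
      set rp : Fin 3 := ⟨p.1.val % 3, hb⟩ with hrp
      have hrow : p.1 = enc i rp := by
        apply Fin.ext; simp [enc, hrp]; omega
      have hF : p.2 = enc (x.1 i rp) (x.2 (x.1 i rp) i) := by
        rw [h2, hrow, Fmap_enc]
      have hj : x.1 i rp = j := by
        apply Fin.ext; rw [← hdj, hF, enc_div]
      have hr : rp = r₀ := by rw [hr₀, ← hj, Equiv.symm_apply_apply]
      rw [hr] at hrow
      exact Prod.ext hrow (by rw [h2, hrow])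
    · rintro rfl
      refine ⟨rfl, enc_div i r₀, ?_⟩
      rw [Fmap_enc, enc_div]
      rw [hr₀]
      simp

lemma Pmap_inj : Function.Injective Pmap := by
  intro x x' h
  have hF : ∀ row, Fmap x row = Fmap x' row := by
    intro row
    have : (row, Fmap x row) ∈ Pmap x' := by
      rw [← h]; exact (mem_Pmap x _).mpr rfl
    exact (mem_Pmap x' _).mp this
  have h1 : x.1 = x'.1 := by
    funext i; apply Equiv.ext; intro r
    have := hF (enc i r)
    rw [Fmap_enc, Fmap_enc] at this
    exact (enc_inj this).1
  apply Prod.ext h1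
  funext s; apply Equiv.ext; intro i
  have := hF (enc i ((x.1 i).symm s))
  rw [Fmap_enc, Fmap_enc] at this
  rw [Equiv.apply_symm_apply] at this
  rw [← h1] at this
  rw [Equiv.apply_symm_apply] at this
  exact (enc_inj this).2

lemma Pmap_surj (P : Finset (Fin (3*3) × Fin (3*3))) (hP : IsValidPlacement 3 3 P) :
    ∃ x, Pmap x = P := by
  obtain ⟨hrow, hcol, hblk⟩ := hP
  have hex : ∀ r : Fin (3*3), ∃ a, P.filter (fun p => p.1 = r) = {a} :=
    fun r => Finset.card_eq_one.mp (hrow r)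
  choose a ha using hex
  have ha1 : ∀ r, (a r).1 = r := by
    intro r
    have : a r ∈ P.filter (fun p => p.1 = r) := by
      rw [ha r]; exact Finset.mem_singleton_self _
    exact (Finset.mem_filter.mp this).2
  set f : Fin (3*3) → Fin (3*3) := fun r => (a r).2 with hf
  have hmem : ∀ p : Fin (3*3) × Fin (3*3), p ∈ P ↔ p.2 = f p.1 := by
    intro p
    constructor
    · intro hp
      have : p ∈ P.filter (fun q => q.1 = p.1) := Finset.mem_filter.mpr ⟨hp, rfl⟩
      rw [ha p.1, Finset.mem_singleton] at this
      exact congrArg Prod.snd this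
    · intro hp
      have hm : a p.1 ∈ P := by
        have : a p.1 ∈ P.filter (fun q => q.1 = p.1) := by
          rw [ha p.1]; exact Finset.mem_singleton_self _
        exact (Finset.mem_filter.mp this).1
      have hpa : p = a p.1 := Prod.ext (ha1 p.1).symm hp
      rw [hpa]; exact hm
  have hfinj : Function.Injective f := by
    intro ρ ρ' hff
    have h1 : (ρ, f ρ) ∈ P.filter (fun p => p.2 = f ρ) :=
      Finset.mem_filter.mpr ⟨(hmem _).mpr rfl, rfl⟩
    have h2 : (ρ', f ρ) ∈ P.filter (fun p => p.2 = f ρ) :=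
      Finset.mem_filter.mpr ⟨(hmem _).mpr hff, rfl⟩
    have := Finset.card_le_one.mp (le_of_eq (hcol (f ρ))) _ h1 _ h2
    exact congrArg Prod.fst this
  set g : Fin 3 → Fin 3 → Fin 3 := fun i r => ⟨(f (enc i r)).val / 3, by omega⟩ with hg
  have hginj : ∀ i, Function.Injective (g i) := by
    intro i r r' hgr
    have hb1 : (enc i r, f (enc i r)) ∈
        P.filter (fun p => p.1.val / 3 = i.val ∧ p.2.val / 3 = (g i r).val) :=
      Finset.mem_filter.mpr ⟨(hmem _).mpr rfl, enc_div i r, rfl⟩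
    have hb2 : (enc i r', f (enc i r')) ∈
        P.filter (fun p => p.1.val / 3 = i.val ∧ p.2.val / 3 = (g i r).val) := by
      refine Finset.mem_filter.mpr ⟨(hmem _).mpr rfl, enc_div i r', ?_⟩
      show (f (enc i r')).val / 3 = (g i r).val
      rw [hgr]
    have := Finset.card_le_one.mp (le_of_eq (hblk i (g i r))) _ hb1 _ hb2
    exact (enc_inj (congrArg Prod.fst this)).2
  set gP : Fin 3 → Equiv.Perm (Fin 3) := fun i =>
    Equiv.ofBijective (g i) (Finite.injective_iff_bijective.mp (hginj i)) with hgP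
  have hgPa : ∀ i r, gP i r = g i r := fun i r => rfl
  set h : Fin 3 → Fin 3 → Fin 3 := fun s i =>
    ⟨(f (enc i ((gP i).symm s))).val % 3, by omega⟩ with hh
  have hdiv : ∀ s i, (f (enc i ((gP i).symm s))).val / 3 = s.val := by
    intro s i
    have h5 : gP i ((gP i).symm s) = s := Equiv.apply_symm_apply _ _
    have h6 : (g i ((gP i).symm s)).val = s.val := congrArg Fin.val h5
    exact h6
  have hhinj : ∀ s, Function.Injective (h s) := by
    intro s i i' hhi
    have hfv : f (enc i ((gP i).symm s)) = f (enc i' ((gP i').symm s)) := by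
      apply Fin.ext
      have e1 := hdiv s i
      have e2 := hdiv s i'
      have e3 : (f (enc i ((gP i).symm s))).val % 3 =
          (f (enc i' ((gP i').symm s))).val % 3 := congrArg Fin.val hhi
      omega
    exact (enc_inj (hfinj hfv)).1
  set hQ : Fin 3 → Equiv.Perm (Fin 3) := fun s =>
    Equiv.ofBijective (h s) (Finite.injective_iff_bijective.mp (hhinj s)) with hhQ
  refine ⟨(gP, hQ), ?_⟩
  have hFf : ∀ i r : Fin 3, Fmap (gP, hQ) (enc i r) = f (enc i r) := by
    intro i r
    rw [Fmap_enc]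
    have e1 : hQ (gP i r) i =
        ⟨(f (enc i ((gP i).symm (gP i r)))).val % 3, by omega⟩ := rfl
    have h3 : (gP i).symm (gP i r) = r := Equiv.symm_apply_apply _ _
    rw [e1]; simp only [h3]
    have e2 : gP i r = (⟨(f (enc i r)).val / 3, by omega⟩ : Fin 3) := rfl
    simp only [e2]
    apply Fin.ext
    show 3 * ((f (enc i r)).val / 3) + (f (enc i r)).val % 3 = (f (enc i r)).val
    omega
  ext p
  rw [mem_Pmap, hmem]
  constructor
  · intro hp; rw [hp, enc_surj p.1, hFf]
  · intro hp; rw [hp, enc_surj p.1, hFf]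

noncomputable def placementEquiv :
    PP ≃ {P : Finset (Fin (3*3) × Fin (3*3)) // IsValidPlacement 3 3 P} :=
  Equiv.ofBijective (fun x => ⟨Pmap x, Pmap_valid x⟩)
    ⟨fun x x' hxx => Pmap_inj (congrArg Subtype.val hxx),
     fun ⟨P, hP⟩ => by
      obtain ⟨x, hx⟩ := Pmap_surj P hP
      exact ⟨x, Subtype.ext hx⟩⟩

end Sudoku33

theorem nine_by_nine_counts :
    Nat.card {M : Fin 3 → Fin 3 → Bool // AlmostBalanced M} = 290 ∧
    Nat.card {P : Finset (Fin (3*3) × Fin (3*3)) // IsValidPlacement 3 3 P} =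
      Nat.factorial 3 ^ 6 ∧
    Nat.factorial 3 ^ 6 = 46656 := by
  refine ⟨?_, ?_, by norm_num [Nat.factorial]⟩
  · rw [Nat.card_eq_fintype_card]
    set_option maxRecDepth 10000 in decide
  · rw [← Nat.card_congr Sudoku33.placementEquiv]
    rw [Nat.card_eq_fintype_card, Fintype.card_prod, Fintype.card_fun,
      Fintype.card_perm, Fintype.card_fin]
    norm_num [Nat.factorial]
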